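/- Let F be a simple graph with adjacent vertices a and b such that every vertex of F other than a and b is adjacent to a or to b, and suppose the subgraphs of F induced on N(a) and on N(b) each contain no 4-clique and no independent 5-set. Let K = N(a) ∩ N(b), let A = N(b) \ (N(a) ∪ {a}), and let B = N(a) \ (N(b) ∪ {b}). Then F contains no 5-clique and no independent 5-set if and only if there is no 5-element vertex set W ⊆ K ∪ A ∪ B with W ∩ A ≠ ∅ and W ∩ B ≠ ∅ such that W is a clique of F or an independent set of F. -/

import Mathlib

open SimpleGraph Set

lemma induce_not_cliqueFree' {V : Type*} (G : SimpleGraph V) (s : Set V) {n : ℕ}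
    (S : Finset V) (hS : (S : Set V) ⊆ s) (hc : G.IsNClique n S) :
    ¬ (G.induce s).CliqueFree n := by
  classical
  intro hfree
  refine hfree (S.attach.map ⟨fun v => (⟨v.1, hS v.2⟩ : s), ?_⟩) ?_
  · intro x y hxy
    have h := congrArg Subtype.val hxy
    exact Subtype.ext h
  · constructor
    · intro x hx y hy hxy
      simp only [Finset.coe_map, Set.mem_image, Finset.mem_coe, Finset.mem_attach,
        Function.Embedding.coeFn_mk, true_and] at hx hy
      obtain ⟨u, -, rfl⟩ := hx
      obtain ⟨w, -, rfl⟩ := hy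
      have hne : (u : V) ≠ (w : V) := by
        intro h; apply hxy; exact Subtype.ext h
      exact hc.1 u.2 w.2 hne
    · simp [hc.2]

lemma compl_induce' {V : Type*} (F : SimpleGraph V) (s : Set V) :
    (F.induce s)ᶜ = Fᶜ.induce s := by
  ext x y
  simp [Subtype.ext_iff]

/-- Gluing criterion: with a, b adjacent covering all other vertices and both
neighborhoods inducing (4,5)-Ramsey graphs, F has no 5-clique and no
independent 5-set iff no 5-element set W ⊆ K ∪ A ∪ B meeting both A and B is
a clique or an independent set, where K = N(a) ∩ N(b),
A = N(b) \ (N(a) ∪ {a}) and B = N(a) \ (N(b) ∪ {b}). -/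
theorem gluing_criterion
    {V : Type*} (F : SimpleGraph V) {a b : V} (hab : F.Adj a b)
    (hcov : ∀ v : V, v ≠ a → v ≠ b → F.Adj a v ∨ F.Adj b v)
    (hNa4 : (F.induce (F.neighborSet a)).CliqueFree 4)
    (hNa5 : (F.induce (F.neighborSet a))ᶜ.CliqueFree 5)
    (hNb4 : (F.induce (F.neighborSet b)).CliqueFree 4)
    (hNb5 : (F.induce (F.neighborSet b))ᶜ.CliqueFree 5) :
    (F.CliqueFree 5 ∧ Fᶜ.CliqueFree 5) ↔
      ¬ ∃ W : Finset V, W.card = 5 ∧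
        (W : Set V) ⊆ (F.neighborSet a ∩ F.neighborSet b) ∪
            (F.neighborSet b \ (F.neighborSet a ∪ {a})) ∪
            (F.neighborSet a \ (F.neighborSet b ∪ {b})) ∧
        ((W : Set V) ∩ (F.neighborSet b \ (F.neighborSet a ∪ {a}))).Nonempty ∧
        ((W : Set V) ∩ (F.neighborSet a \ (F.neighborSet b ∪ {b}))).Nonempty ∧
        (F.IsClique (W : Set V) ∨ Fᶜ.IsClique (W : Set V)) := by
  classical
  rw [compl_induce'] at hNa5 hNb5
  constructor
  · rintro ⟨h5, h5c⟩ ⟨W, hcard, -, -, -, hcl | hcl⟩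
    · exact h5 W ⟨hcl, hcard⟩
    · exact h5c W ⟨hcl, hcard⟩
  · intro hno
    have haNb : a ∈ F.neighborSet b := hab.symm
    have hbNa : b ∈ F.neighborSet a := hab
    have hcov' : ∀ v : V, v ≠ a → v ≠ b →
        v ∈ (F.neighborSet a ∩ F.neighborSet b) ∪
            (F.neighborSet b \ (F.neighborSet a ∪ {a})) ∪
            (F.neighborSet a \ (F.neighborSet b ∪ {b})) := by
      intro v hva hvb
      rcases hcov v hva hvb with h | h
      · by_cases h2 : F.Adj b v
        · exact Or.inl (Or.inl ⟨h, h2⟩)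
        · exact Or.inr ⟨h, by simp [SimpleGraph.mem_neighborSet, h2, hvb]⟩
      · by_cases h2 : F.Adj a v
        · exact Or.inl (Or.inl ⟨h2, h⟩)
        · exact Or.inl (Or.inr ⟨h, by simp [SimpleGraph.mem_neighborSet, h2, hva]⟩)
    constructor
    · intro S hS
      by_cases haS : a ∈ S
      · refine induce_not_cliqueFree' F (F.neighborSet a) (S.erase a) ?_ ?_ hNa4
        · intro v hv
          simp only [Finset.coe_erase, Set.mem_diff, Finset.mem_coe,
            Set.mem_singleton_iff] at hv
          exact hS.1 (Finset.mem_coe.mpr haS) hv.1 (Ne.symm hv.2)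
        · exact ⟨hS.1.subset (by simp [Finset.erase_subset]),
            by rw [Finset.card_erase_of_mem haS, hS.2]⟩
      · by_cases hbS : b ∈ S
        · refine induce_not_cliqueFree' F (F.neighborSet b) (S.erase b) ?_ ?_ hNb4
          · intro v hv
            simp only [Finset.coe_erase, Set.mem_diff, Finset.mem_coe,
              Set.mem_singleton_iff] at hv
            exact hS.1 (Finset.mem_coe.mpr hbS) hv.1 (Ne.symm hv.2)
          · exact ⟨hS.1.subset (by simp [Finset.erase_subset]),
              by rw [Finset.card_erase_of_mem hbS, hS.2]⟩
        · have hsub := fun v (hv : v ∈ (S : Set V)) =>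
            hcov' v (by rintro rfl; exact haS hv) (by rintro rfl; exact hbS hv)
          by_cases hA :
              ((S : Set V) ∩ (F.neighborSet b \ (F.neighborSet a ∪ {a}))).Nonempty
          · by_cases hB :
                ((S : Set V) ∩ (F.neighborSet a \ (F.neighborSet b ∪ {b}))).Nonempty
            · exact hno ⟨S, hS.2, hsub, hA, hB, Or.inl hS.1⟩
            · refine induce_not_cliqueFree' F (F.neighborSet b) S ?_ hS
                (hNb4.mono (by norm_num))
              intro v hv
              rcases hsub v hv with (h | h) | h
              · exact h.2
              · exact h.1
              · exact absurd ⟨v, hv, h⟩ hB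
          · refine induce_not_cliqueFree' F (F.neighborSet a) S ?_ hS
              (hNa4.mono (by norm_num))
            intro v hv
            rcases hsub v hv with (h | h) | h
            · exact h.1
            · exact absurd ⟨v, hv, h⟩ hA
            · exact h.1
    · intro S hS
      by_cases haS : a ∈ S
      · refine induce_not_cliqueFree' Fᶜ (F.neighborSet b) S ?_ hS hNb5
        intro v hv
        by_cases hva : v = a
        · subst hva; exact haNb
        · have hadj : Fᶜ.Adj a v :=
            hS.1 (Finset.mem_coe.mpr haS) hv (fun h => hva h.symm)
          have hvb : v ≠ b := by
            rintro rfl; exact hadj.2 hab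
          rcases hcov v hva hvb with h | h
          · exact absurd h hadj.2
          · exact h
      · by_cases hbS : b ∈ S
        · refine induce_not_cliqueFree' Fᶜ (F.neighborSet a) S ?_ hS hNa5
          intro v hv
          by_cases hvb : v = b
          · subst hvb; exact hbNa
          · have hadj : Fᶜ.Adj b v :=
              hS.1 (Finset.mem_coe.mpr hbS) hv (fun h => hvb h.symm)
            have hva : v ≠ a := by
              rintro rfl; exact hadj.2 hab.symm
            rcases hcov v hva hvb with h | h
            · exact h
            · exact absurd h hadj.2
        · have hsub := fun v (hv : v ∈ (S : Set V)) =>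
            hcov' v (by rintro rfl; exact haS hv) (by rintro rfl; exact hbS hv)
          by_cases hA :
              ((S : Set V) ∩ (F.neighborSet b \ (F.neighborSet a ∪ {a}))).Nonempty
          · by_cases hB :
                ((S : Set V) ∩ (F.neighborSet a \ (F.neighborSet b ∪ {b}))).Nonempty
            · exact hno ⟨S, hS.2, hsub, hA, hB, Or.inr hS.1⟩
            · refine induce_not_cliqueFree' Fᶜ (F.neighborSet b) S ?_ hS hNb5
              intro v hv
              rcases hsub v hv with (h | h) | h
              · exact h.2
              · exact h.1
              · exact absurd ⟨v, hv, h⟩ hB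
          · refine induce_not_cliqueFree' Fᶜ (F.neighborSet a) S ?_ hS hNa5
            intro v hv
            rcases hsub v hv with (h | h) | h
            · exact h.1
            · exact absurd ⟨v, hv, h⟩ hA
            · exact h.1
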